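/- Let F ⊆ [P_{n+l−1}]_{≥l} be an upper filter, suppose m < n, and let f ∈ J_{l,m,F} := (Δ_m) ∩ J_{l,F} be written as f = g_d x_n^d + … + g_1 x_n + g_0 with g_0,…,g_d ∈ K[x_1,…,x_{n−1}] and g_d ≠ 0. Then g_0,…,g_d all belong to J_{l,m,F_{d+1}} := (Δ_m) ∩ J_{l,F_{d+1}}, the corresponding ideal of K[x_1,…,x_{n−1}]. -/

import Mathlib

open MvPolynomial

namespace SpechtLL

/-- A partition of `N`: a non-increasing list of positive integers summing to `N`. -/
structure Partition (N : ℕ) where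
  parts : List ℕ
  sorted : parts.Pairwise (· ≥ ·)
  pos : ∀ p ∈ parts, 0 < p
  sum_eq : parts.sum = N

/-- `domLE ν μ` means ν ⊴ μ in the dominance order. -/
def domLE {N : ℕ} (nu mu : Partition N) : Prop :=
  ∀ i : ℕ, (nu.parts.take i).sum ≤ (mu.parts.take i).sum

/-- The first (largest) part λ₁ of a partition. -/
def partOne {N : ℕ} (lam : Partition N) : ℕ := lam.parts.headD 0

/-- The cells (i, j) (row i, column j, 0-indexed) of the Young diagram of a partition. -/
def cells {N : ℕ} (lam : Partition N) : Finset (ℕ × ℕ) :=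
  (Finset.range lam.parts.length ×ˢ Finset.range (partOne lam)).filter
    (fun c => c.2 < lam.parts.getD c.1 0)

/-- The length λ⊥ⱼ of the j-th column of the Young diagram. -/
def colLen {N : ℕ} (lam : Partition N) (j : ℕ) : ℕ :=
  lam.parts.countP (fun p => decide (j < p))

/-- The list of entries of the j-th column of a filling `T`, from top to bottom. -/
def colList {n N : ℕ} (lam : Partition N) (T : ℕ × ℕ → Fin n) (j : ℕ) : List (Fin n) :=
  (List.range (colLen lam j)).map fun i => T (i, j)

/-- The multiset of entries: `l` copies of the special entry `sp` and each other
element of `Fin n` exactly once. -/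
def fillContent (n : ℕ) (l : ℕ) (sp : Fin n) : Multiset (Fin n) :=
  Multiset.replicate (l - 1) sp + (Finset.univ : Finset (Fin n)).val

/-- `T` is a filling of the diagram of `lam` by the multiset consisting of `l` copies of `sp`
and each other element of `Fin n` once, with no two copies of `sp` in the same column. -/
def IsFilling {n N : ℕ} (l : ℕ) (sp : Fin n) (lam : Partition N) (T : ℕ × ℕ → Fin n) : Prop :=
  (cells lam).val.map T = fillContent n l sp ∧
    ∀ j : ℕ, (colList lam T j).count sp ≤ 1

/-- Standard tableau: columns strictly increase from top to bottom and rows are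
non-decreasing from left to right. -/
def IsStandard {n N : ℕ} (lam : Partition N) (T : ℕ × ℕ → Fin n) : Prop :=
  (∀ i j : ℕ, (i + 1, j) ∈ cells lam → T (i, j) < T (i + 1, j)) ∧
  (∀ i j : ℕ, (i, j + 1) ∈ cells lam → T (i, j) ≤ T (i, j + 1))

variable (K : Type*) [Field K]

/-- The difference product of a list of (indices of) variables. -/
noncomputable def deltaList {n : ℕ} : List (Fin n) → MvPolynomial (Fin n) K
  | [] => 1
  | a :: rest => ((rest.map fun b => X a - X b).prod) * deltaList rest

/-- The Specht polynomial of a filling `T` of shape `lam`. -/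
noncomputable def spechtPoly {n N : ℕ} (lam : Partition N) (T : ℕ × ℕ → Fin n) : MvPolynomial (Fin n) K :=
  ((List.range (partOne lam)).map fun j => deltaList K (colList lam T j)).prod

/-- The Specht ideal generated by all Specht polynomials of fillings of shape `lam`
(with `l` copies of the special entry `sp`). -/
noncomputable def spechtIdeal {n N : ℕ} (l : ℕ) (sp : Fin n) (lam : Partition N) :
    Ideal (MvPolynomial (Fin n) K) :=
  Ideal.span {f | ∃ T, IsFilling l sp lam T ∧ f = spechtPoly K lam T}

/-- The lexicographic order on monomials with x₁ < x₂ < ⋯ < xₙ: the larger monomial is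
decided at the highest-index variable where the exponents differ. -/
def lexLt {n : ℕ} (a b : Fin n →₀ ℕ) : Prop :=
  ∃ i : Fin n, a i < b i ∧ ∀ j : Fin n, i < j → a j = b j

/-- A monomial order: a strict linear order on exponent vectors compatible with
addition and having 0 as least element. -/
def IsMonomialOrder {n : ℕ} (lt : (Fin n →₀ ℕ) → (Fin n →₀ ℕ) → Prop) : Prop :=
  (∀ a b c, lt a b → lt b c → lt a c) ∧
  (∀ a, ¬ lt a a) ∧
  (∀ a b, a = b ∨ lt a b ∨ lt b a) ∧
  (∀ a b c, lt a b → lt (a + c) (b + c)) ∧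
  (∀ a, a ≠ 0 → lt 0 a)

/-- `d` is the exponent vector of the initial monomial of `f` with respect to the
monomial order `lt`. -/
def IsInitialFor {n : ℕ} (lt : (Fin n →₀ ℕ) → (Fin n →₀ ℕ) → Prop)
    (f : MvPolynomial (Fin n) K) (d : Fin n →₀ ℕ) : Prop :=
  d ∈ f.support ∧ ∀ e ∈ f.support, e ≠ d → lt e d

/-- `G` is a Gröbner basis of `I` w.r.t. `lt`: `G ⊆ I` and the initial monomial of every
nonzero element of `I` is divisible by the initial monomial of some element of `G`. -/
def IsGroebnerBasisFor {n : ℕ} (lt : (Fin n →₀ ℕ) → (Fin n →₀ ℕ) → Prop)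
    (G : Set (MvPolynomial (Fin n) K)) (I : Ideal (MvPolynomial (Fin n) K)) : Prop :=
  (∀ g ∈ G, g ∈ I) ∧
  ∀ f ∈ I, f ≠ 0 → ∀ d, IsInitialFor K lt f d →
    ∃ g ∈ G, ∃ e, IsInitialFor K lt g e ∧ e ≤ d

/-- The ideal of polynomials vanishing on all points satisfying `P`. -/
def vanishingIdeal (n : ℕ) (P : (Fin n → K) → Prop) : Ideal (MvPolynomial (Fin n) K) where
  carrier := {f | ∀ a : Fin n → K, P a → MvPolynomial.eval a f = 0}
  add_mem' := by
    intro f g hf hg a ha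
    simp only [Set.mem_setOf_eq] at *
    rw [map_add, hf a ha, hg a ha, add_zero]
  zero_mem' := by intro a _; simp
  smul_mem' := by
    intro c f hf a ha
    simp only [Set.mem_setOf_eq, smul_eq_mul, map_mul] at *
    rw [hf a ha, mul_zero]

/-- `mu` is the multiplicity partition of the multiset `M`: the parts of `mu` are
exactly the multiplicities of the distinct elements of `M`. -/
def IsMultPartition {M' : ℕ} [DecidableEq K] (M : Multiset K) (mu : Partition M') : Prop :=
  (↑mu.parts : Multiset ℕ) = M.toFinset.val.map fun α => M.count α

/-- The multiset of values of the vector `a_{(l)} ∈ K^{n+l-1}` obtained from `a ∈ Kⁿ`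
by repeating the first coordinate `l` times. -/
def lamL {n : ℕ} [NeZero n] (l : ℕ) (a : Fin n → K) : Multiset K :=
  Multiset.replicate (l - 1) (a 0) + (Finset.univ : Finset (Fin n)).val.map a

/-- The multiset of parts of the partition `mu + ⟨i⟩` (i is 1-indexed). -/
def addBoxMultiset {N : ℕ} (mu : Partition N) (i : ℕ) : Multiset ℕ :=
  if i ≤ mu.parts.length then
    ((↑mu.parts : Multiset ℕ).erase (mu.parts.getD (i - 1) 0)) + {mu.parts.getD (i - 1) 0 + 1}
  else ↑mu.parts + {1}

/-- `nu = mu + ⟨i⟩`. -/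
def IsAddBox {N M : ℕ} (mu : Partition N) (i : ℕ) (nu : Partition M) : Prop :=
  (↑nu.parts : Multiset ℕ) = addBoxMultiset mu i

/-- The largest element of `Fin n`. -/
def finLast (n : ℕ) [NeZero n] : Fin n := ⟨n - 1, by have := NeZero.ne n; omega⟩

/-- The number `w(T)` of squares of `T` lying above some square filled with `sp`. -/
def wval {n N : ℕ} (lam : Partition N) (sp : Fin n) (T : ℕ × ℕ → Fin n) : ℕ :=
  ((cells lam).filter fun c =>
    ∃ i' ∈ Finset.range (colLen lam c.2), c.1 < i' ∧ T (i', c.2) = sp).card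

/-- `mu = sh_{<n}(T)`: the shape obtained from `T` (of shape `lam`) by removing all
squares filled with `sp`, described via column lengths. -/
def HasShapeRemoved {n N M : ℕ} (lam : Partition N) (sp : Fin n) (T : ℕ × ℕ → Fin n)
    (mu : Partition M) : Prop :=
  ∀ j : ℕ, colLen mu j + (colList lam T j).count sp = colLen lam j

/-- Difference product of a list, omitting the factors where both indices are < m. -/
noncomputable def deltaListAvoid (m : ℕ) {n : ℕ} : List (Fin n) → MvPolynomial (Fin n) K
  | [] => 1
  | a :: rest =>
      ((rest.filter fun b => decide (m ≤ a.val ∨ m ≤ b.val)).map fun b => X a - X b).prod *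
        deltaListAvoid m rest

/-- Δ_m = Δ({1, …, m}), the difference product of the first m variables. -/
noncomputable def deltaM (n m : ℕ) : MvPolynomial (Fin n) K :=
  deltaList K ((List.finRange n).take m)

/-- `f_{m,T} = lcm(f_T, Δ_m)`: the product of `Δ_m` with all factors of the Specht
polynomial `f_T` not already occurring in `Δ_m`. -/
noncomputable def fmPoly {n N : ℕ} (m : ℕ) (lam : Partition N) (T : ℕ × ℕ → Fin n) :
    MvPolynomial (Fin n) K :=
  deltaM K n m *
    ((List.range (partOne lam)).map fun j => deltaListAvoid K m (colList lam T j)).prod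

/-- The ideal `I_{l,m,λ}` generated by the `f_{m,T}`, `T ∈ Tab(l,λ)`. -/
noncomputable def spechtIdealM {n N : ℕ} (m l : ℕ) (sp : Fin n) (lam : Partition N) :
    Ideal (MvPolynomial (Fin n) K) :=
  Ideal.span {f | ∃ T, IsFilling l sp lam T ∧ f = fmPoly K m lam T}



/-! ### Auxiliary lemmas -/

section ListBump

/-- Replace the first element of `L` that is `≤ c` (which, for a sorted-descending list
containing `c`, is the first occurrence of `c`) by its successor. -/
def bumpList (c : ℕ) : List ℕ → List ℕ
  | [] => []
  | a :: rest => if c < a then a :: bumpList c rest else (a + 1) :: rest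

theorem bumpList_length (c : ℕ) (L : List ℕ) : (bumpList c L).length = L.length := by
  induction L with
  | nil => rfl
  | cons a rest ih =>
      by_cases h : c < a <;> simp [bumpList, h, ih]

theorem bumpList_coe (c : ℕ) (L : List ℕ) (hs : L.Pairwise (· ≥ ·)) (hc : c ∈ L) :
    (↑(bumpList c L) : Multiset ℕ) = (↑L : Multiset ℕ).erase c + {c + 1} := by
  induction L with
  | nil => simp at hc
  | cons a rest ih =>
      rw [List.pairwise_cons] at hs
      rw [List.mem_cons] at hc
      by_cases h : c < a
      · have hcr : c ∈ rest := by
          rcases hc with hc | hc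
          · omega
          · exact hc
        rw [bumpList, if_pos h]
        show (a ::ₘ (↑(bumpList c rest) : Multiset ℕ)) = (a ::ₘ (↑rest : Multiset ℕ)).erase c + {c+1}
        rw [Multiset.erase_cons_tail _ (by omega), ih hs.2 hcr, Multiset.cons_add]
      · have ha : a = c := by
          rcases hc with hc | hc
          · omega
          · have := hs.1 c hc; omega
        subst ha
        rw [bumpList, if_neg h]
        show ((a+1) ::ₘ (↑rest : Multiset ℕ)) = (a ::ₘ (↑rest : Multiset ℕ)).erase a + {a + 1}
        rw [Multiset.erase_cons_head, add_comm ((↑rest : Multiset ℕ)) {a + 1},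
          Multiset.singleton_add]

theorem bumpList_mem {c x : ℕ} {L : List ℕ} (hs : L.Pairwise (· ≥ ·)) (hc : c ∈ L)
    (hx : x ∈ bumpList c L) : x ∈ L ∨ x = c + 1 := by
  have := bumpList_coe c L hs hc
  have hx' : x ∈ (↑(bumpList c L) : Multiset ℕ) := by exact_mod_cast hx
  rw [this, Multiset.mem_add, Multiset.mem_singleton] at hx'
  rcases hx' with h | h
  · exact Or.inl (by exact_mod_cast Multiset.mem_of_mem_erase h)
  · exact Or.inr h

theorem bumpList_sorted (c : ℕ) (L : List ℕ) (hs : L.Pairwise (· ≥ ·)) (hc : c ∈ L) :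
    (bumpList c L).Pairwise (· ≥ ·) := by
  induction L with
  | nil => simp [bumpList]
  | cons a rest ih =>
      rw [List.pairwise_cons] at hs
      rw [List.mem_cons] at hc
      by_cases h : c < a
      · have hcr : c ∈ rest := by
          rcases hc with hc | hc
          · omega
          · exact hc
        rw [bumpList, if_pos h, List.pairwise_cons]
        refine ⟨fun b hb => ?_, ih hs.2 hcr⟩
        rcases bumpList_mem hs.2 hcr hb with hb | hb
        · exact hs.1 b hb
        · omega
      · have ha : a = c := by
          rcases hc with hc | hc
          · omega
          · have := hs.1 c hc; omega
        subst ha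
        rw [bumpList, if_neg h, List.pairwise_cons]
        exact ⟨fun b hb => by have := hs.1 b hb; omega, hs.2⟩

theorem bumpList_take_sum (c : ℕ) (L : List ℕ) (hs : L.Pairwise (· ≥ ·)) (hc : c ∈ L) (k : ℕ) :
    ((bumpList c L).take k).sum =
      (L.take k).sum + (if L.countP (fun p => decide (c < p)) < k then 1 else 0) := by
  induction L generalizing k with
  | nil => simp at hc
  | cons a rest ih =>
      rw [List.pairwise_cons] at hs
      rw [List.mem_cons] at hc
      by_cases h : c < a
      · have hcr : c ∈ rest := by
          rcases hc with hc | hc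
          · omega
          · exact hc
        rw [bumpList, if_pos h]
        cases k with
        | zero => simp
        | succ k =>
            simp only [List.take_succ_cons, List.sum_cons, List.countP_cons]
            rw [ih hs.2 hcr k]
            have : decide (c < a) = true := by simpa using h
            rw [this]
            have := List.countP_le_length (p := fun p => decide (c < p)) (l := rest)
            by_cases hk : rest.countP (fun p => decide (c < p)) < k <;>
              simp [hk] <;> omega
      · have ha : a = c := by
          rcases hc with hc | hc
          · omega
          · have := hs.1 c hc; omega
        subst ha
        have hcount : rest.countP (fun p => decide (a < p)) = 0 := by
          rw [List.countP_eq_zero]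
          intro x hx
          have := hs.1 x hx
          simpa using (by omega : ¬ a < x)
        rw [bumpList, if_neg h]
        cases k with
        | zero => simp
        | succ k =>
            simp only [List.take_succ_cons, List.sum_cons, List.countP_cons]
            rw [hcount]
            simp [h]
            omega

theorem bumpList_sum (c : ℕ) (L : List ℕ) (hs : L.Pairwise (· ≥ ·)) (hc : c ∈ L) :
    (bumpList c L).sum = L.sum + 1 := by
  have := bumpList_take_sum c L hs hc (L.length + 1)
  rw [List.take_of_length_le (by rw [bumpList_length]; omega),
    List.take_of_length_le (by omega)] at this
  rw [this, if_pos]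
  have := List.countP_le_length (p := fun p => decide (c < p)) (l := L)
  omega

theorem bumpList_headD (c : ℕ) (L : List ℕ) : L.headD 0 ≤ (bumpList c L).headD 0 := by
  cases L with
  | nil => simp [bumpList]
  | cons a rest => by_cases h : c < a <;> simp [bumpList, h]

theorem countP_getD_lt_le {L : List ℕ} (hs : L.Pairwise (· ≥ ·)) (i : ℕ) (hi : i < L.length) :
    L.countP (fun p => decide (L.getD i 0 < p)) ≤ i := by
  induction L generalizing i with
  | nil => simp at hi
  | cons a rest ih =>
      rw [List.pairwise_cons] at hs
      cases i with
      | zero =>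
          rw [List.getD_cons_zero, List.countP_cons]
          have h1 : rest.countP (fun p => decide (a < p)) = 0 := by
            rw [List.countP_eq_zero]
            intro x hx
            have := hs.1 x hx
            simpa using (by omega : ¬ a < x)
          simp [h1]
      | succ i =>
          have hi' : i < rest.length := by simpa using hi
          rw [List.getD_cons_succ, List.countP_cons]
          have hv : rest.getD i 0 ≤ a := by
            refine hs.1 _ ?_
            rw [List.getD_eq_getElem rest 0 hi']
            exact List.getElem_mem hi'
          have := ih hs.2 i hi'
          by_cases hh : rest.getD i 0 < a
          · rw [if_pos (decide_eq_true hh)]; omega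
          · rw [if_neg (by simpa using hh)]; omega

theorem le_countP_getD_le {L : List ℕ} (hs : L.Pairwise (· ≥ ·)) (i : ℕ) (hi : i < L.length) :
    i + 1 ≤ L.countP (fun p => decide (L.getD i 0 ≤ p)) := by
  induction L generalizing i with
  | nil => simp at hi
  | cons a rest ih =>
      rw [List.pairwise_cons] at hs
      cases i with
      | zero =>
          rw [List.getD_cons_zero, List.countP_cons]
          simp
      | succ i =>
          have hi' : i < rest.length := by simpa using hi
          rw [List.getD_cons_succ, List.countP_cons]
          have hv : rest.getD i 0 ≤ a := by
            refine hs.1 _ ?_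
            rw [List.getD_eq_getElem rest 0 hi']
            exact List.getElem_mem hi'
          have := ih hs.2 i hi'
          rw [if_pos (decide_eq_true hv)]
          omega

theorem append_one_take_sum (L : List ℕ) (k : ℕ) :
    ((L ++ [1]).take k).sum = (L.take k).sum + (if L.length < k then 1 else 0) := by
  rw [List.take_append, List.sum_append]
  by_cases h : L.length < k
  · rw [if_pos h]
    have h1 : L.take k = L := List.take_of_length_le (by omega)
    have h2 : ([1] : List ℕ).take (k - L.length) = [1] := List.take_of_length_le (by simp; omega)
    rw [h2]
    rfl
  · rw [if_neg h]
    have h2 : ([1] : List ℕ).take (k - L.length) = [] := by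
      have : k - L.length = 0 := by omega
      rw [this, List.take_zero]
    rw [h2]
    rfl

end ListBump

section Algebraic

theorem rename_deltaList {n n' : ℕ} (φ : Fin n → Fin n') (L : List (Fin n)) :
    rename φ (deltaList K L) = deltaList K (L.map φ) := by
  induction L with
  | nil => simp [deltaList]
  | cons a rest ih =>
      rw [deltaList, map_mul, ih, List.map_cons, deltaList]
      congr 1
      rw [map_list_prod]
      rw [List.map_map, List.map_map]
      congr 1
      refine List.map_congr_left fun b _ => ?_
      simp

theorem finRange_take_succ (n m : ℕ) (hm : m ≤ n) :
    (List.finRange (n + 1)).take m = ((List.finRange n).take m).map Fin.castSucc := by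
  apply List.ext_getElem
  · simp [hm, Nat.le_succ_of_le hm]
  · intro i h1 h2
    have hi : i < m := by simpa [hm, Nat.le_succ_of_le hm] using h1
    simp only [List.getElem_take, List.getElem_map, List.getElem_finRange]
    ext
    simp

theorem deltaM_succ (n m : ℕ) (hm : m ≤ n) :
    deltaM K (n + 1) m = rename Fin.castSucc (deltaM K n m) := by
  rw [deltaM, deltaM, rename_deltaList, finRange_take_succ n m hm]

/-- Split off the last variable. -/
noncomputable def lastEquiv (n : ℕ) :
    MvPolynomial (Fin (n + 1)) K ≃ₐ[K] Polynomial (MvPolynomial (Fin n) K) :=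
  (renameEquiv K finSuccEquivLast).trans (optionEquivLeft K (Fin n))

theorem optionEquivLeft_rename_some {S : Type*} (q : MvPolynomial S K) :
    optionEquivLeft K S (rename some q) = Polynomial.C q := by
  induction q using MvPolynomial.induction_on with
  | C r => rw [rename_C, optionEquivLeft_C]
  | add p q hp hq => rw [map_add, map_add, hp, hq, map_add]
  | mul_X p i hp => rw [map_mul, map_mul, hp, rename_X, optionEquivLeft_X_some, map_mul]

theorem lastEquiv_rename (n : ℕ) (q : MvPolynomial (Fin n) K) :
    lastEquiv K n (rename Fin.castSucc q) = Polynomial.C q := by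
  have h1 : (renameEquiv K (finSuccEquivLast (n := n))) (rename Fin.castSucc q)
      = rename some q := by
    have h2 : (⇑(finSuccEquivLast (n := n)) ∘ Fin.castSucc) = some :=
      funext fun i => finSuccEquivLast_castSucc i
    rw [renameEquiv_apply, rename_rename, h2]
  rw [lastEquiv, AlgEquiv.trans_apply, h1, optionEquivLeft_rename_some]

theorem lastEquiv_X_last (n : ℕ) :
    lastEquiv K n (X (Fin.last n)) = Polynomial.X := by
  rw [lastEquiv, AlgEquiv.trans_apply, renameEquiv_apply, rename_X, finSuccEquivLast_last,
    optionEquivLeft_X_none]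

theorem coeff_sum_C_X {R : Type*} [CommSemiring R] (e : ℕ → R) (d i : ℕ) (hi : i ≤ d) :
    (∑ j ∈ Finset.range (d + 1), Polynomial.C (e j) * Polynomial.X ^ j).coeff i = e i := by
  rw [Polynomial.finset_sum_coeff]
  rw [Finset.sum_eq_single i]
  · rw [Polynomial.coeff_C_mul, Polynomial.coeff_X_pow, if_pos rfl, mul_one]
  · intro j _ hj
    rw [Polynomial.coeff_C_mul, Polynomial.coeff_X_pow, if_neg (fun h => hj h.symm), mul_zero]
  · intro h
    exact absurd (Finset.mem_range.mpr (by omega)) h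

theorem mem_vanishingIdeal_iff {n : ℕ} {P : (Fin n → K) → Prop} {f : MvPolynomial (Fin n) K} :
    f ∈ vanishingIdeal K n P ↔ ∀ a : Fin n → K, P a → MvPolynomial.eval a f = 0 :=
  Iff.rfl

end Algebraic

section Counts

variable [DecidableEq K]

theorem cons_eq_add_singleton {α : Type*} (s : Multiset α) (x : α) :
    x ::ₘ s = s + {x} := by
  rw [add_comm, Multiset.singleton_add]

theorem counts_add_mem {M : Multiset K} {t : K} (ht : t ∈ M) :
    (M + {t}).toFinset.val.map (fun α => (M + {t}).count α)
      = (M.toFinset.val.map fun α => M.count α).erase (M.count t) + {M.count t + 1} := by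
  have htf : t ∈ M.toFinset := Multiset.mem_toFinset.mpr ht
  have hTF : (M + {t}).toFinset = M.toFinset := by
    rw [Multiset.toFinset_add, Multiset.toFinset_singleton]
    exact Finset.union_eq_left.mpr (by simpa using htf)
  rw [hTF]
  have hval : M.toFinset.val = t ::ₘ M.toFinset.val.erase t :=
    (Multiset.cons_erase (Finset.mem_val.mpr htf)).symm
  have hcount_t : (M + {t}).count t = M.count t + 1 := by
    rw [Multiset.count_add, Multiset.count_singleton, if_pos rfl]
  have hcount_ne : ∀ α ∈ M.toFinset.val.erase t, (M + {t}).count α = M.count α := by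
    intro α hα
    have hne : α ≠ t := ((M.toFinset.nodup.mem_erase_iff).mp hα).1
    rw [Multiset.count_add, Multiset.count_singleton, if_neg hne, add_zero]
  calc M.toFinset.val.map (fun α => (M + {t}).count α)
      = (t ::ₘ M.toFinset.val.erase t).map (fun α => (M + {t}).count α) := by rw [← hval]
    _ = (M.count t + 1) ::ₘ (M.toFinset.val.erase t).map (fun α => M.count α) := by
        rw [Multiset.map_cons, hcount_t, Multiset.map_congr rfl hcount_ne]
    _ = (M.toFinset.val.erase t).map (fun α => M.count α) + {M.count t + 1} :=
        cons_eq_add_singleton _ _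
    _ = (M.toFinset.val.map fun α => M.count α).erase (M.count t) + {M.count t + 1} := by
        congr 1
        have : M.toFinset.val.map (fun α => M.count α)
            = M.count t ::ₘ (M.toFinset.val.erase t).map (fun α => M.count α) := by
          conv_lhs => rw [hval]
          rw [Multiset.map_cons]
        rw [this, Multiset.erase_cons_head]

theorem counts_add_not_mem {M : Multiset K} {t : K} (ht : t ∉ M) :
    (M + {t}).toFinset.val.map (fun α => (M + {t}).count α)
      = (M.toFinset.val.map fun α => M.count α) + {1} := by
  have htf : t ∉ M.toFinset := fun h => ht (Multiset.mem_toFinset.mp h)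
  have hTF : (M + {t}).toFinset = insert t M.toFinset := by
    rw [Multiset.toFinset_add, Multiset.toFinset_singleton, Finset.union_comm,
      ← Finset.insert_eq]
  have hval : (insert t M.toFinset).val = t ::ₘ M.toFinset.val :=
    Finset.insert_val_of_notMem htf
  have hcount_t : (M + {t}).count t = 1 := by
    rw [Multiset.count_add, Multiset.count_singleton, if_pos rfl,
      Multiset.count_eq_zero_of_notMem ht]
  have hcount_ne : ∀ α ∈ M.toFinset.val, (M + {t}).count α = M.count α := by
    intro α hα
    have hne : α ≠ t := fun h => htf (h ▸ Finset.mem_val.mp hα)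
    rw [Multiset.count_add, Multiset.count_singleton, if_neg hne, add_zero]
  rw [hTF, hval, Multiset.map_cons, hcount_t, Multiset.map_congr rfl hcount_ne,
    cons_eq_add_singleton]

theorem lamL_snoc {n : ℕ} [NeZero n] (l : ℕ) (a : Fin n → K) (t : K) :
    lamL K l (Fin.snoc a t) = lamL K l a + {t} := by
  rw [lamL, lamL]
  have h00 : (0 : Fin (n+1)) = Fin.castSucc (0 : Fin n) := by
    ext; simp
  have h0 : (Fin.snoc a t : Fin (n+1) → K) 0 = a 0 := by
    rw [h00]
    exact @Fin.snoc_castSucc n (fun _ => K) t a 0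
  have huniv : (Finset.univ : Finset (Fin (n+1))).val.map (Fin.snoc a t)
      = t ::ₘ (Finset.univ : Finset (Fin n)).val.map a := by
    rw [Fin.univ_castSuccEmb, Finset.cons_val, Multiset.map_cons, Fin.snoc_last,
      Finset.map_val, Multiset.map_map]
    congr 1
    refine Multiset.map_congr rfl fun i _ => ?_
    exact @Fin.snoc_castSucc n (fun _ => K) t a i
  rw [h0, huniv, cons_eq_add_singleton]
  exact (add_assoc _ _ _).symm

end Counts

/-- Lemma `keylemma3`. If m is less than the number of ambient
variables (here n+1) and f = Σ gᵢ xₙⁱ ∈ J_{l,m,F} = (Δ_m) ∩ J_{l,F}, then each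
gᵢ ∈ J_{l,m,F_{d+1}} = (Δ_m) ∩ J_{l,F_{d+1}} in the body ring. -/
theorem statement16 (K : Type*) [Field K] [Infinite K] [DecidableEq K] (n l m d : ℕ)
    [NeZero n] (hl : 0 < l) (hm : 1 ≤ m) (hmn : m < n + 1)
    (F : Set (Partition (n + 1 + l - 1)))
    (hFsub : ∀ mu ∈ F, l ≤ partOne mu)
    (hFup : ∀ mu ∈ F, ∀ nu : Partition (n + 1 + l - 1), l ≤ partOne nu → domLE mu nu → nu ∈ F)
    (g : ℕ → MvPolynomial (Fin n) K) (hgd : g d ≠ 0)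
    (f : MvPolynomial (Fin (n + 1)) K)
    (hf : f = ∑ i ∈ Finset.range (d + 1),
        MvPolynomial.rename Fin.castSucc (g i) * MvPolynomial.X (Fin.last n) ^ i)
    (hfJ : f ∈ Ideal.span {deltaM K (n + 1) m} ⊓ vanishingIdeal K (n + 1)
        (fun a => ∃ mu ∈ F, IsMultPartition K (lamL K l a) mu)) :
    ∀ i ≤ d, g i ∈ Ideal.span {deltaM K n m} ⊓ vanishingIdeal K n (fun a =>
      ∃ mu : Partition (n + l - 1),
        (l ≤ partOne mu ∧ ∃ nu ∈ F, IsAddBox mu (d + 1) nu) ∧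
        IsMultPartition K (lamL K l a) mu) := by
  have hn : 0 < n := Nat.pos_of_ne_zero (NeZero.ne n)
  rw [Ideal.mem_inf] at hfJ
  obtain ⟨hfD, hfV⟩ := hfJ
  rw [Ideal.mem_span_singleton] at hfD
  obtain ⟨h, hfh⟩ := hfD
  intro i hi
  rw [Ideal.mem_inf]
  constructor
  · -- Δ_m divides g i
    rw [Ideal.mem_span_singleton]
    refine ⟨(lastEquiv K n h).coeff i, ?_⟩
    have hE2 : lastEquiv K n f
        = ∑ j ∈ Finset.range (d + 1), Polynomial.C (g j) * Polynomial.X ^ j := by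
      rw [hf, map_sum]
      refine Finset.sum_congr rfl fun j _ => ?_
      rw [map_mul, map_pow, lastEquiv_rename, lastEquiv_X_last]
    have hE : lastEquiv K n f = Polynomial.C (deltaM K n m) * lastEquiv K n h := by
      rw [hfh, map_mul, deltaM_succ K n m (by omega), lastEquiv_rename]
    have h3 : g i = (lastEquiv K n f).coeff i := by
      rw [hE2, coeff_sum_C_X (fun j => g j) d i hi]
    rw [h3, hE, Polynomial.coeff_C_mul]
  · rw [mem_vanishingIdeal_iff]
    rintro a ⟨mu, ⟨hlmu, nu, hnuF, hbox⟩, hmult⟩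
    have hmu : (↑mu.parts : Multiset ℕ)
        = (lamL K l a).toFinset.val.map fun α => (lamL K l a).count α := hmult
    set p : Polynomial K := ∑ j ∈ Finset.range (d + 1),
      Polynomial.C (MvPolynomial.eval a (g j)) * Polynomial.X ^ j with hp
    have hpdeg : p.natDegree ≤ d := by
      refine Polynomial.natDegree_sum_le_of_forall_le _ _ fun j hj => ?_
      refine le_trans (Polynomial.natDegree_C_mul_le _ _) ?_
      rw [Polynomial.natDegree_X_pow]
      exact Nat.lt_succ_iff.mp (Finset.mem_range.mp hj)
    have hpt : ∀ t : K, p.eval t = MvPolynomial.eval (Fin.snoc a t) f := by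
      intro t
      rw [hf, map_sum, hp, Polynomial.eval_finset_sum]
      refine Finset.sum_congr rfl fun j _ => ?_
      rw [Polynomial.eval_mul, Polynomial.eval_pow, Polynomial.eval_C, Polynomial.eval_X,
        map_mul, map_pow, MvPolynomial.eval_X, Fin.snoc_last, MvPolynomial.eval_rename]
      have hcomp : (Fin.snoc a t : Fin (n+1) → K) ∘ Fin.castSucc = a :=
        funext fun b => @Fin.snoc_castSucc n (fun _ => K) t a b
      rw [hcomp]
    have hgood : ∀ t : K, (∃ mu' ∈ F, IsMultPartition K (lamL K l a + {t}) mu') →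
        p.eval t = 0 := by
      rintro t ⟨mu', hmu'F, hmm⟩
      rw [hpt t]
      refine hfV (Fin.snoc a t) ⟨mu', hmu'F, ?_⟩
      show IsMultPartition K (lamL K l (Fin.snoc a t)) mu'
      rwa [lamL_snoc]
    -- key construction: bump the multiplicity of an existing value
    have key : ∀ t ∈ lamL K l a,
        mu.parts.countP (fun q => decide ((lamL K l a).count t < q)) ≤ d →
        ∃ mu' ∈ F, IsMultPartition K (lamL K l a + {t}) mu' := by
      intro t ht hrow
      have hcmem : (lamL K l a).count t ∈ mu.parts := by
        rw [← Multiset.mem_coe, hmu]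
        exact Multiset.mem_map_of_mem _ (Finset.mem_val.mpr (Multiset.mem_toFinset.mpr ht))
      have hsum : (bumpList ((lamL K l a).count t) mu.parts).sum = n + 1 + l - 1 := by
        rw [bumpList_sum _ mu.parts mu.sorted hcmem, mu.sum_eq]; omega
      refine ⟨⟨bumpList ((lamL K l a).count t) mu.parts,
        bumpList_sorted _ mu.parts mu.sorted hcmem, fun q hq => ?_, hsum⟩, ?_, ?_⟩
      · rcases bumpList_mem mu.sorted hcmem hq with hq | hq
        · exact mu.pos q hq
        · omega
      · -- membership in F via the upper-filter property
        refine hFup nu hnuF _ ?_ ?_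
        · show l ≤ (bumpList ((lamL K l a).count t) mu.parts).headD 0
          exact le_trans hlmu (bumpList_headD _ mu.parts)
        · intro k
          show (nu.parts.take k).sum
            ≤ ((bumpList ((lamL K l a).count t) mu.parts).take k).sum
          rw [bumpList_take_sum _ mu.parts mu.sorted hcmem k]
          by_cases hlen : d + 1 ≤ mu.parts.length
          · have hcsmem : mu.parts.getD d 0 ∈ mu.parts := by
              rw [List.getD_eq_getElem mu.parts 0 (by omega)]
              exact List.getElem_mem _
            have hnup : nu.parts = bumpList (mu.parts.getD d 0) mu.parts := by
              refine List.Perm.eq_of_pairwise' nu.sorted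
                (bumpList_sorted _ mu.parts mu.sorted hcsmem) (Multiset.coe_eq_coe.mp ?_)
              rw [bumpList_coe _ mu.parts mu.sorted hcsmem, hbox, addBoxMultiset,
                if_pos hlen]
              simp only [Nat.add_sub_cancel]
            rw [hnup, bumpList_take_sum _ mu.parts mu.sorted hcsmem k]
            have hcsc : mu.parts.getD d 0 ≤ (lamL K l a).count t := by
              by_contra hcon
              push_neg at hcon
              have h1 := le_countP_getD_le mu.sorted d (by omega)
              have h2 : mu.parts.countP (fun q => decide (mu.parts.getD d 0 ≤ q))
                  ≤ mu.parts.countP (fun q => decide ((lamL K l a).count t < q)) :=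
                List.countP_mono_left fun x _ hx => by
                  simp only [decide_eq_true_eq] at *
                  omega
              omega
            have hmono : mu.parts.countP (fun q => decide ((lamL K l a).count t < q))
                ≤ mu.parts.countP (fun q => decide (mu.parts.getD d 0 < q)) :=
              List.countP_mono_left fun x _ hx => by
                simp only [decide_eq_true_eq] at *
                omega
            by_cases h5 : mu.parts.countP (fun q => decide (mu.parts.getD d 0 < q)) < k
            · rw [if_pos h5, if_pos (Nat.lt_of_le_of_lt hmono h5)]
            · rw [if_neg h5]
              by_cases h6 : mu.parts.countP
                  (fun q => decide ((lamL K l a).count t < q)) < k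
              · rw [if_pos h6]; omega
              · rw [if_neg h6]
          · have hcoapp : (↑nu.parts : Multiset ℕ)
                = ((mu.parts ++ [1] : List ℕ) : Multiset ℕ) := by
              rw [hbox, addBoxMultiset, if_neg hlen]
              rfl
            have hnup : nu.parts = mu.parts ++ [1] := by
              refine List.Perm.eq_of_pairwise' nu.sorted ?_ (Multiset.coe_eq_coe.mp hcoapp)
              rw [List.pairwise_append]
              refine ⟨mu.sorted, List.pairwise_singleton _ _, fun x hx y hy => ?_⟩
              have h7 := mu.pos x hx
              have h8 : y = 1 := List.mem_singleton.mp hy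
              omega
            rw [hnup, append_one_take_sum]
            have hle : mu.parts.countP (fun q => decide ((lamL K l a).count t < q))
                ≤ mu.parts.length := List.countP_le_length
            by_cases h5 : mu.parts.length < k
            · rw [if_pos h5, if_pos (by omega)]
            · rw [if_neg h5]
              by_cases h6 : mu.parts.countP
                  (fun q => decide ((lamL K l a).count t < q)) < k
              · rw [if_pos h6]; omega
              · rw [if_neg h6]
      · -- it is the multiplicity partition of lamL a + {t}
        show (↑(bumpList ((lamL K l a).count t) mu.parts) : Multiset ℕ) = _
        rw [bumpList_coe _ mu.parts mu.sorted hcmem, hmu, counts_add_mem K ht]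
    have hzero : p = 0 := by
      by_cases hlen : d + 1 ≤ mu.parts.length
      · refine Polynomial.eq_zero_of_natDegree_lt_card_of_eval_eq_zero' p
          ((lamL K l a).toFinset.filter
            (fun α => mu.parts.getD d 0 ≤ (lamL K l a).count α)) ?_ ?_
        · intro t htT
          rw [Finset.mem_filter] at htT
          obtain ⟨htM, hcst⟩ := htT
          refine hgood t (key t (Multiset.mem_toFinset.mp htM) ?_)
          have h2 := countP_getD_lt_le mu.sorted d (by omega)
          have h3 : mu.parts.countP (fun q => decide ((lamL K l a).count t < q))
              ≤ mu.parts.countP (fun q => decide (mu.parts.getD d 0 < q)) :=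
            List.countP_mono_left fun x _ hx => by
              simp only [decide_eq_true_eq] at *
              omega
          omega
        · -- the filter has at least d+1 elements
          have h1 : ((lamL K l a).toFinset.filter
              (fun α => mu.parts.getD d 0 ≤ (lamL K l a).count α)).card
              = (↑mu.parts : Multiset ℕ).countP (fun q => mu.parts.getD d 0 ≤ q) := by
            rw [hmu, Multiset.countP_map, Finset.card_def, Finset.filter_val]
          have h2 := le_countP_getD_le mu.sorted d (by omega)
          have h3 : (↑mu.parts : Multiset ℕ).countP (fun q => mu.parts.getD d 0 ≤ q)
              = mu.parts.countP (fun q => decide (mu.parts.getD d 0 ≤ q)) := by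
            simp [Multiset.coe_countP]
          omega
      · refine Polynomial.zero_of_eval_zero p fun t => ?_
        by_cases htM : t ∈ lamL K l a
        · exact hgood t (key t htM (le_trans (List.countP_le_length) (by omega)))
        · refine hgood t ⟨nu, hnuF, ?_⟩
          show (↑nu.parts : Multiset ℕ) = _
          rw [counts_add_not_mem K htM, ← hmu, hbox, addBoxMultiset, if_neg hlen]
    have hco : MvPolynomial.eval a (g i) = p.coeff i :=
      (coeff_sum_C_X (fun j => MvPolynomial.eval a (g j)) d i hi).symm
    rw [hco, hzero, Polynomial.coeff_zero]

end SpechtLL
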